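/- arXiv:1207.2274 — 2 statements merged into one kernel-verified Lean document; each statement's English description precedes it below -/
import Mathlib

section
/- Fix an integer N > 1. Every mKdV tuple of subsets (S₁,…,S_N) arises from the construction S_{S,σ}: setting S = S_N with leading term A = {a₁ < … < a_N}, there exists a permutation σ of {1,…,N} such that S_i = {a_{σ(1)}+i−N, …, a_{σ(i)}+i−N} ∪ (S+i) for every i = 1,…,N. -/
/-- A subset `S ⊆ ℤ` is of virtual cardinal zero if both `S \ ℤ≥0` and `ℤ≥0 \ S`
are finite and have the same cardinality. -/
def VirtualCardZero (S : Set ℤ) : Prop :=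
  (S \ {n : ℤ | 0 ≤ n}).Finite ∧ ({n : ℤ | 0 ≤ n} \ S).Finite ∧
    (S \ {n : ℤ | 0 ≤ n}).ncard = ({n : ℤ | 0 ≤ n} \ S).ncard

/-- The shift `S + k = {s + k : s ∈ S}` of a set of integers. -/
def shiftSet (S : Set ℤ) (k : ℤ) : Set ℤ := (fun s => s + k) '' S

/-- A KdV subset (for a fixed `N`): a subset `S ⊆ ℤ` of virtual cardinal zero
such that `S + N ⊆ S`. -/
def IsKdV (N : ℕ) (S : Set ℤ) : Prop :=
  VirtualCardZero S ∧ shiftSet S N ⊆ S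

/-- `A` is the leading term of the KdV subset `S`: `A` is an `N`-element set with
`S = A ∪ (S+N)` and `A ∩ (S+N) = ∅`. -/
def IsLeadingTerm (N : ℕ) (S : Set ℤ) (A : Finset ℤ) : Prop :=
  A.card = N ∧ (↑A : Set ℤ) ∪ shiftSet S N = S ∧ (↑A : Set ℤ) ∩ shiftSet S N = ∅

/-- The mutation `S[a] = {a+1−N} ∪ (S+1)` of a KdV subset `S` at an element `a`
of its leading term. -/
def mutate (N : ℕ) (S : Set ℤ) (a : ℤ) : Set ℤ :=
  {a + 1 - (N : ℤ)} ∪ shiftSet S 1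

/-- An mKdV tuple of subsets: an `N`-tuple `(S₁,…,S_N)` of KdV subsets with
`S_i + 1 ⊆ S_{i+1}` for `i = 1,…,N−1` and `S_N + 1 ⊆ S₁` (i.e. cyclically). -/
def IsMKdVTuple (N : ℕ) [NeZero N] (T : Fin N → Set ℤ) : Prop :=
  (∀ i, IsKdV N (T i)) ∧ ∀ i : Fin N, shiftSet (T i) 1 ⊆ T (i + 1)

/-- The tuple `S_{S,σ}`: given a KdV subset `S` whose leading term is enumerated
increasingly by `a : Fin N → ℤ` and a permutation `σ`, its `i`-th entry (`i` being
0-based, corresponding to the 1-based index `i+1`) is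
`S_{i+1} = {a_{σ(1)}+(i+1)−N, …, a_{σ(i+1)}+(i+1)−N} ∪ (S+(i+1))`. -/
def mkTuple (N : ℕ) (S : Set ℤ) (a : Fin N → ℤ) (σ : Equiv.Perm (Fin N))
    (i : Fin N) : Set ℤ :=
  ((fun j : Fin N => a (σ j) + ((i : ℕ) : ℤ) + 1 - (N : ℤ)) ''
      {j : Fin N | (j : ℕ) ≤ (i : ℕ)}) ∪ shiftSet S (((i : ℕ) : ℤ) + 1)

namespace MKdVAux

lemma mem_shiftSet {S : Set ℤ} {k x : ℤ} : x ∈ shiftSet S k ↔ x - k ∈ S := by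
  constructor
  · rintro ⟨s, hs, rfl⟩; simpa using hs
  · intro h; exact ⟨x - k, h, by ring⟩

lemma shiftSet_zero (S : Set ℤ) : shiftSet S 0 = S := by
  ext x; simp [mem_shiftSet]

lemma shiftSet_shiftSet (S : Set ℤ) (j k : ℤ) :
    shiftSet (shiftSet S j) k = shiftSet S (j + k) := by
  ext x
  simp only [mem_shiftSet]
  constructor <;> intro h
  · have : x - (j + k) = x - k - j := by ring
    rwa [this]
  · have : x - k - j = x - (j + k) := by ring
    rwa [this]

lemma shiftSet_mono {S T : Set ℤ} (h : S ⊆ T) (k : ℤ) :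
    shiftSet S k ⊆ shiftSet T k := Set.image_mono h

lemma shiftSet_union (S T : Set ℤ) (k : ℤ) :
    shiftSet (S ∪ T) k = shiftSet S k ∪ shiftSet T k := Set.image_union _ _ _

def P : Set ℤ := {n : ℤ | 0 ≤ n}

def Tame (X : Set ℤ) : Prop := (X \ P).Finite ∧ (P \ X).Finite

noncomputable def vcf (X : Set ℤ) : ℤ := ((X \ P).ncard : ℤ) - ((P \ X).ncard : ℤ)

lemma vcz_iff (X : Set ℤ) : VirtualCardZero X ↔ Tame X ∧ vcf X = 0 := by
  unfold VirtualCardZero Tame vcf P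
  constructor
  · rintro ⟨h1, h2, h3⟩; exact ⟨⟨h1, h2⟩, by rw [h3]; ring⟩
  · rintro ⟨⟨h1, h2⟩, h3⟩; exact ⟨h1, h2, by omega⟩

lemma shift_one (X : Set ℤ) (hX : Tame X) :
    Tame (shiftSet X 1) ∧ vcf (shiftSet X 1) = vcf X - 1 := by
  set Q : Set ℤ := {n : ℤ | -1 ≤ n} with hQ
  have h1 : shiftSet X 1 \ P = shiftSet (X \ Q) 1 := by
    ext x; simp only [Set.mem_diff, mem_shiftSet, P, Q, Set.mem_setOf_eq]
    constructor <;> rintro ⟨h, h'⟩ <;> exact ⟨h, by omega⟩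
  have h2 : P \ shiftSet X 1 = shiftSet (Q \ X) 1 := by
    ext x; simp only [Set.mem_diff, mem_shiftSet, P, Q, Set.mem_setOf_eq]
    constructor <;> rintro ⟨h, h'⟩ <;> exact ⟨by omega, h'⟩
  have hXQfin : (X \ Q).Finite := hX.1.subset (by
    intro x hx; simp only [Set.mem_diff, P, Q, Set.mem_setOf_eq] at *
    exact ⟨hx.1, fun hc => hx.2 (by omega)⟩)
  have hQXfin : (Q \ X).Finite := by
    have : Q \ X ⊆ insert (-1) (P \ X) := by
      intro x hx; simp only [Set.mem_diff, Set.mem_insert_iff, P, Q, Set.mem_setOf_eq] at *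
      rcases hx with ⟨h, h'⟩
      rcases eq_or_lt_of_le h with h'' | h''
      · exact Or.inl h''.symm
      · exact Or.inr ⟨by omega, h'⟩
    exact (hX.2.insert (-1)).subset this
  refine ⟨⟨h1 ▸ hXQfin.image _, h2 ▸ hQXfin.image _⟩, ?_⟩
  have e1 : (shiftSet X 1 \ P).ncard = (X \ Q).ncard := by
    rw [h1]; exact Set.ncard_image_of_injective _ (add_left_injective 1)
  have e2 : (P \ shiftSet X 1).ncard = (Q \ X).ncard := by
    rw [h2]; exact Set.ncard_image_of_injective _ (add_left_injective 1)
  unfold vcf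
  rw [e1, e2]
  by_cases hm : (-1 : ℤ) ∈ X
  · have hxq : X \ Q = (X \ P) \ {-1} := by
      ext x; simp only [Set.mem_diff, P, Q, Set.mem_setOf_eq, Set.mem_singleton_iff]
      constructor
      · rintro ⟨h, h'⟩; exact ⟨⟨h, by omega⟩, by omega⟩
      · rintro ⟨⟨h, h'⟩, h''⟩; exact ⟨h, by omega⟩
    have hqx : Q \ X = P \ X := by
      ext x; simp only [Set.mem_diff, P, Q, Set.mem_setOf_eq]
      constructor
      · rintro ⟨h, h'⟩
        refine ⟨?_, h'⟩
        rcases eq_or_lt_of_le h with h'' | h''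
        · exact absurd (h''.symm ▸ hm) h'
        · omega
      · rintro ⟨h, h'⟩; exact ⟨by omega, h'⟩
    have hmem : (-1 : ℤ) ∈ X \ P := ⟨hm, by simp [P]⟩
    have : (X \ Q).ncard = (X \ P).ncard - 1 := by
      rw [hxq, Set.ncard_diff_singleton_of_mem hmem]
    have hpos : 1 ≤ (X \ P).ncard := (Set.ncard_pos hX.1).2 ⟨-1, hmem⟩
    rw [this, hqx]
    push_cast [Nat.cast_sub hpos]
    ring
  · have hxq : X \ Q = X \ P := by
      ext x; simp only [Set.mem_diff, P, Q, Set.mem_setOf_eq]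
      constructor
      · rintro ⟨h, h'⟩; exact ⟨h, by omega⟩
      · rintro ⟨h, h'⟩
        refine ⟨h, fun hc => ?_⟩
        rcases eq_or_lt_of_le hc with h'' | h''
        · exact hm (h'' ▸ h)
        · omega
    have hqx : Q \ X = insert (-1) (P \ X) := by
      ext x; simp only [Set.mem_diff, P, Q, Set.mem_setOf_eq, Set.mem_insert_iff]
      constructor
      · rintro ⟨h, h'⟩
        rcases eq_or_lt_of_le h with h'' | h''
        · exact Or.inl h''.symm
        · exact Or.inr ⟨by omega, h'⟩
      · rintro (rfl | ⟨h, h'⟩)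
        · exact ⟨le_refl _, hm⟩
        · exact ⟨by omega, h'⟩
    have hnm : (-1 : ℤ) ∉ P \ X := by simp [P]
    rw [hxq, hqx, Set.ncard_insert_of_notMem hnm hX.2]
    push_cast
    ring

lemma union_finite (F X : Set ℤ) (hF : F.Finite) (hd : Disjoint F X) (hX : Tame X) :
    Tame (F ∪ X) ∧ vcf (F ∪ X) = vcf X + F.ncard := by
  have h1 : (F ∪ X) \ P = (F \ P) ∪ (X \ P) := Set.union_diff_distrib
  have h2 : P \ (F ∪ X) = (P \ X) \ F := by
    ext x; simp only [Set.mem_diff, Set.mem_union]; tauto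
  have hfin1 : ((F ∪ X) \ P).Finite := h1 ▸ ((hF.subset Set.diff_subset).union hX.1)
  have hfin2 : (P \ (F ∪ X)).Finite := h2 ▸ (hX.2.subset Set.diff_subset)
  refine ⟨⟨hfin1, hfin2⟩, ?_⟩
  have hsub : (P \ X) ∩ F ⊆ P \ X := Set.inter_subset_left
  have e2 : (P \ (F ∪ X)).ncard = (P \ X).ncard - ((P \ X) ∩ F).ncard := by
    rw [h2]
    have : (P \ X) \ F = (P \ X) \ ((P \ X) ∩ F) := by
      ext x; simp only [Set.mem_diff, Set.mem_inter_iff]; tauto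
    rw [this, Set.ncard_diff hsub (hX.2.subset hsub)]
  have e1 : ((F ∪ X) \ P).ncard = (F \ P).ncard + (X \ P).ncard := by
    rw [h1, Set.ncard_union_eq ?_ (hF.subset Set.diff_subset) hX.1]
    exact hd.mono Set.diff_subset Set.diff_subset
  have hFsplit : (F \ P).ncard + (F ∩ P).ncard = F.ncard := by
    rw [← Set.ncard_union_eq ?_ (hF.subset Set.diff_subset) (hF.subset Set.inter_subset_left)]
    · congr 1; ext x; simp only [Set.mem_union, Set.mem_diff, Set.mem_inter_iff]; tauto
    · exact Set.disjoint_left.2 (fun x hx hx' => hx.2 hx'.2)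
  have hPXF : (P \ X) ∩ F = F ∩ P := by
    ext x; simp only [Set.mem_diff, Set.mem_inter_iff]
    constructor
    · rintro ⟨⟨h1', h2'⟩, h3'⟩; exact ⟨h3', h1'⟩
    · rintro ⟨h1', h2'⟩; exact ⟨⟨h2', fun hc => (Set.disjoint_left.1 hd h1') hc⟩, h1'⟩
  rw [hPXF] at e2
  have hle : (F ∩ P).ncard ≤ (P \ X).ncard := by
    rw [← hPXF]; exact Set.ncard_le_ncard hsub hX.2
  unfold vcf
  rw [e1, e2, ← hFsplit]
  push_cast [Nat.cast_sub hle]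
  ring

lemma shift_nat (S : Set ℤ) (hS : Tame S) (k : ℕ) :
    Tame (shiftSet S k) ∧ vcf (shiftSet S k) = vcf S - k := by
  induction k with
  | zero =>
    have h0 : shiftSet S ((0 : ℕ) : ℤ) = S := by rw [Nat.cast_zero, shiftSet_zero]
    rw [h0]
    exact ⟨hS, by simp⟩
  | succ n ih =>
    have h : shiftSet S ((n + 1 : ℕ) : ℤ) = shiftSet (shiftSet S n) 1 := by
      rw [shiftSet_shiftSet]; push_cast; ring_nf
    rw [h]
    obtain ⟨ht, hv⟩ := shift_one _ ih.1
    refine ⟨ht, ?_⟩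
    rw [hv, ih.2]; push_cast; ring

lemma diff_ncard {V S : Set ℤ} (hV : VirtualCardZero V) (hS : VirtualCardZero S)
    (k : ℕ) (hsub : shiftSet S k ⊆ V) (hfin : (V \ shiftSet S k).Finite) :
    (V \ shiftSet S k).ncard = k := by
  rw [vcz_iff] at hV hS
  obtain ⟨htS, hvS⟩ := hS
  obtain ⟨htX, hvX⟩ := shift_nat S htS k
  have hU : (V \ shiftSet S k) ∪ shiftSet S k = V := Set.diff_union_of_subset hsub
  have hd : Disjoint (V \ shiftSet S k) (shiftSet S k) := Set.disjoint_sdiff_left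
  obtain ⟨_, hv⟩ := union_finite _ _ hfin hd htX
  rw [hU, hV.2, hvX, hvS] at hv
  omega

end MKdVAux

open MKdVAux in
/-- Fix `N > 1`.  Every mKdV tuple of subsets `(S₁,…,S_N)` arises
from the construction `S_{S,σ}`: with `S = S_N` whose leading term
`A = {a₁ < … < a_N}` is enumerated increasingly by `a`, there is a permutation `σ`
of `{1,…,N}` with `S_i = {a_{σ(1)}+i−N, …, a_{σ(i)}+i−N} ∪ (S+i)` for all `i`. -/
theorem mkdvTuple_eq_mkTuple (N : ℕ) [NeZero N] (hN : 1 < N)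
    (T : Fin N → Set ℤ) (hT : IsMKdVTuple N T)
    (A : Finset ℤ) (hA : IsLeadingTerm N (T ⟨N - 1, by omega⟩) A)
    (a : Fin N → ℤ) (ha : StrictMono a) (haA : (↑A : Set ℤ) = Set.range a) :
    ∃ σ : Equiv.Perm (Fin N), ∀ i : Fin N,
      T i = mkTuple N (T ⟨N - 1, by omega⟩) a σ i := by
  classical
  obtain ⟨hKdV, hstep⟩ := hT
  have hNpos : 0 < N := by omega
  set S : Set ℤ := T ⟨N - 1, by omega⟩ with hSdef
  set T' : ℕ → Set ℤ := fun m => T ⟨m % N, Nat.mod_lt _ hNpos⟩ with hT'def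
  have hT'eq : ∀ (m : ℕ) (h : m < N), T' m = T ⟨m, h⟩ := by
    intro m h
    simp only [hT'def]
    have hfin : (⟨m % N, Nat.mod_lt _ hNpos⟩ : Fin N) = ⟨m, h⟩ := by
      apply Fin.ext
      exact Nat.mod_eq_of_lt h
    rw [hfin]
  have hSN : S = T' (N - 1) := (hT'eq (N - 1) (by omega)).symm
  have hone : (1 : Fin N).val = 1 := by
    have := Fin.val_one' N
    rw [this, Nat.mod_eq_of_lt hN]
  have hstep' : ∀ m, m + 1 < N → shiftSet (T' m) 1 ⊆ T' (m + 1) := by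
    intro m h
    rw [hT'eq m (by omega), hT'eq (m + 1) h]
    have he : (⟨m, by omega⟩ : Fin N) + 1 = ⟨m + 1, h⟩ := by
      apply Fin.ext
      rw [Fin.val_add, hone]
      exact Nat.mod_eq_of_lt h
    rw [← he]
    exact hstep _
  have hcyc : shiftSet S 1 ⊆ T' 0 := by
    rw [hT'eq 0 (by omega)]
    have he : (⟨N - 1, by omega⟩ : Fin N) + 1 = ⟨0, by omega⟩ := by
      apply Fin.ext
      rw [Fin.val_add, hone]
      have he2 : N - 1 + 1 = N := by omega
      rw [he2, Nat.mod_self]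
    rw [← he]
    exact hstep _
  -- lower bound: shift of S sits inside every T' m
  have hub1 : ∀ m, m < N → shiftSet S ((m : ℤ) + 1) ⊆ T' m := by
    intro m
    induction m with
    | zero => intro _; simpa using hcyc
    | succ k ih =>
      intro h
      have h1 : shiftSet S ((k : ℤ) + 1) ⊆ T' k := ih (by omega)
      have h2 : shiftSet S (((k + 1 : ℕ) : ℤ) + 1) = shiftSet (shiftSet S ((k : ℤ) + 1)) 1 := by
        rw [shiftSet_shiftSet]; push_cast; ring_nf
      rw [h2]
      exact (shiftSet_mono h1 1).trans (hstep' k h)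
  -- upper bound
  have hub2aux : ∀ k, k ≤ N - 1 → T' (N - 1 - k) ⊆ shiftSet S (-(k : ℤ)) := by
    intro k
    induction k with
    | zero => intro _; simp [shiftSet_zero, ← hSN]
    | succ j ih =>
      intro h
      have hj : T' (N - 1 - j) ⊆ shiftSet S (-(j : ℤ)) := ih (by omega)
      have heq : N - 1 - (j + 1) + 1 = N - 1 - j := by omega
      have hs : shiftSet (T' (N - 1 - (j + 1))) 1 ⊆ T' (N - 1 - j) := by
        have := hstep' (N - 1 - (j + 1)) (by omega)
        rwa [heq] at this
      intro x hx
      have hx1 : x + 1 ∈ shiftSet S (-(j : ℤ)) := hj (hs ⟨x, hx, rfl⟩)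
      rw [mem_shiftSet] at hx1 ⊢
      push_cast
      have : x - -((j : ℤ) + 1) = x + 1 - -(j : ℤ) := by ring
      rw [this]
      exact hx1
  have hub2 : ∀ m, m < N → T' m ⊆ shiftSet S ((m : ℤ) + 1 - N) := by
    intro m hm
    have h := hub2aux (N - 1 - m) (by omega)
    have h1 : N - 1 - (N - 1 - m) = m := by omega
    rw [h1] at h
    have h2 : (-(((N - 1 - m : ℕ)) : ℤ)) = (m : ℤ) + 1 - N := by
      have : ((N - 1 - m : ℕ) : ℤ) = (N : ℤ) - 1 - m := by omega
      rw [this]; ring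
    rwa [h2] at h
  -- decomposition of shifts of S
  have hdecomp : ∀ m : ℤ,
      shiftSet S (m + 1 - N) = shiftSet (↑A) (m + 1 - N) ∪ shiftSet S (m + 1) := by
    intro m
    conv_lhs => rw [← hA.2.1]
    rw [shiftSet_union, shiftSet_shiftSet]
    congr 2
    ring
  have hdisj2 : ∀ (m : ℤ) (x : ℤ),
      x ∈ shiftSet (↑A) (m + 1 - N) → x ∈ shiftSet S (m + 1) → False := by
    intro m x h1 h2
    rw [mem_shiftSet] at h1 h2
    have hxA : x - (m + 1 - N) ∈ (↑A : Set ℤ) := h1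
    have hxS : x - (m + 1 - N) ∈ shiftSet S N := by
      rw [mem_shiftSet]
      have : x - (m + 1 - N) - N = x - (m + 1) := by ring
      rw [this]; exact h2
    have hmem : x - (m + 1 - N) ∈ (↑A : Set ℤ) ∩ shiftSet S N := ⟨hxA, hxS⟩
    rw [hA.2.2] at hmem
    exact hmem
  -- the index sets
  set Cn : ℕ → Set (Fin N) :=
    fun m => {j : Fin N | a j + ((m : ℤ) + 1 - N) ∈ T' m} with hCndef
  have hainj : Function.Injective a := ha.injective
  -- D m description
  have hDsub : ∀ m, m < N →
      T' m \ shiftSet S ((m : ℤ) + 1) ⊆ shiftSet (↑A) ((m : ℤ) + 1 - N) := by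
    intro m hm x hx
    have h1 := hub2 m hm hx.1
    rw [hdecomp (m : ℤ)] at h1
    rcases h1 with h1 | h1
    · exact h1
    · exact absurd h1 hx.2
  have hCD : ∀ m, m < N →
      T' m \ shiftSet S ((m : ℤ) + 1) = (fun j => a j + ((m : ℤ) + 1 - N)) '' Cn m := by
    intro m hm
    ext x
    constructor
    · intro hx
      have h1 := hDsub m hm hx
      rw [mem_shiftSet] at h1
      have h2 : x - ((m : ℤ) + 1 - N) ∈ Set.range a := haA ▸ h1
      obtain ⟨j, hj⟩ := h2
      refine ⟨j, ?_, ?_⟩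
      swap
      · show a j + ((m : ℤ) + 1 - N) = x
        omega
      show a j + ((m : ℤ) + 1 - N) ∈ T' m
      have he : a j + ((m : ℤ) + 1 - N) = x := by omega
      rw [he]; exact hx.1
    · rintro ⟨j, hj, rfl⟩
      refine ⟨hj, fun hc => ?_⟩
      have hmem : a j + ((m : ℤ) + 1 - N) ∈ shiftSet (↑A) ((m : ℤ) + 1 - N) := by
        rw [mem_shiftSet]
        have he : a j + ((m : ℤ) + 1 - N) - ((m : ℤ) + 1 - N) = a j := by ring
        rw [he, haA]
        exact ⟨j, rfl⟩
      exact hdisj2 (m : ℤ) _ hmem hc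
  -- cardinality of Cn m
  have hCcard : ∀ m, m < N → (Cn m).ncard = m + 1 := by
    intro m hm
    have hfin : (T' m \ shiftSet S ((m : ℤ) + 1)).Finite := by
      apply Set.Finite.subset ((A.finite_toSet).image _)
      exact hDsub m hm
    have hVCV : VirtualCardZero (T' m) := by
      rw [hT'eq m hm]; exact (hKdV ⟨m, hm⟩).1
    have hVCS : VirtualCardZero S := by
      rw [hSN, hT'eq (N - 1) (by omega)]; exact (hKdV _).1
    have hcast : ((m + 1 : ℕ) : ℤ) = (m : ℤ) + 1 := by push_cast; ring
    have hd := diff_ncard hVCV hVCS (m + 1) (hcast ▸ hub1 m hm) (by rw [hcast]; exact hfin)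
    rw [hcast] at hd
    have himg : ((fun j => a j + ((m : ℤ) + 1 - N)) '' Cn m).ncard = (Cn m).ncard :=
      Set.ncard_image_of_injective _ (fun x y hxy => hainj (by omega))
    rw [hCD m hm, himg] at hd
    exact hd
  -- monotonicity of Cn
  have hCmono1 : ∀ m, m + 1 < N → Cn m ⊆ Cn (m + 1) := by
    intro m h j hj
    have hj' : a j + ((m : ℤ) + 1 - N) ∈ T' m := hj
    have h2 : (a j + ((m : ℤ) + 1 - N)) + 1 ∈ T' (m + 1) :=
      hstep' m h ⟨_, hj', rfl⟩
    show a j + (((m + 1 : ℕ) : ℤ) + 1 - N) ∈ T' (m + 1)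
    have he : a j + (((m + 1 : ℕ) : ℤ) + 1 - N) = (a j + ((m : ℤ) + 1 - N)) + 1 := by
      push_cast; ring
    rw [he]; exact h2
  have hCmono : ∀ m k, m ≤ k → k < N → Cn m ⊆ Cn k := by
    intro m k
    induction k with
    | zero =>
      intro h _
      have hm0 : m = 0 := by omega
      subst hm0; exact subset_rfl
    | succ j ih =>
      intro h hk
      rcases Nat.eq_or_lt_of_le h with h' | h'
      · subst h'; exact subset_rfl
      · exact (ih (by omega) (by omega)).trans (hCmono1 j hk)
  -- previous sets and the permutation
  set Cp : ℕ → Set (Fin N) := fun m => if m = 0 then ∅ else Cn (m - 1) with hCpdef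
  have hCpsub : ∀ m, m < N → Cp m ⊆ Cn m := by
    intro m hm
    by_cases h0 : m = 0
    · simp [hCpdef, h0]
    · simp only [hCpdef, if_neg h0]
      exact hCmono (m - 1) m (by omega) hm
  have hCpcard : ∀ m, m < N → (Cp m).ncard = m := by
    intro m hm
    by_cases h0 : m = 0
    · simp [hCpdef, h0]
    · simp only [hCpdef, if_neg h0]
      rw [hCcard (m - 1) (by omega)]
      omega
  have hE : ∀ m, m < N → ∃ j : Fin N, Cn m \ Cp m = {j} := by
    intro m hm
    rw [← Set.ncard_eq_one]
    rw [Set.ncard_diff (hCpsub m hm) (Set.toFinite _), hCcard m hm, hCpcard m hm]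
    omega
  set g : Fin N → Fin N := fun j => (hE j.1 j.2).choose with hgdef
  have hgspec : ∀ j : Fin N, Cn j.1 \ Cp j.1 = {g j} := fun j => (hE j.1 j.2).choose_spec
  have hgC : ∀ j : Fin N, g j ∈ Cn j.1 := by
    intro j
    have hmem : g j ∈ Cn j.1 \ Cp j.1 := by rw [hgspec j]; rfl
    exact hmem.1
  have hgnp : ∀ j : Fin N, g j ∉ Cp j.1 := by
    intro j
    have hmem : g j ∈ Cn j.1 \ Cp j.1 := by rw [hgspec j]; rfl
    exact hmem.2
  have hglt : ∀ j k : Fin N, j.1 < k.1 → g j ≠ g k := by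
    intro j k hjk he
    apply hgnp k
    have hk0 : k.1 ≠ 0 := by omega
    simp only [hCpdef, if_neg hk0]
    rw [← he]
    exact hCmono j.1 (k.1 - 1) (by omega) (by omega) (hgC j)
  have hginj : Function.Injective g := by
    intro j k he
    rcases lt_trichotomy j.1 k.1 with h' | h' | h'
    · exact absurd he (hglt j k h')
    · exact Fin.ext h'
    · exact absurd he.symm (hglt k j h')
  have hgbij : Function.Bijective g := Finite.injective_iff_bijective.1 hginj
  set σ : Equiv.Perm (Fin N) := Equiv.ofBijective g hgbij with hσdef
  -- image description of Cn
  have hIic : ∀ m, m < N → ({j : Fin N | j.1 ≤ m} : Set (Fin N)).ncard = m + 1 := by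
    intro m hm
    have he : {j : Fin N | j.1 ≤ m} = (Fin.castLE (by omega : m + 1 ≤ N)) '' Set.univ := by
      ext j
      simp only [Set.mem_setOf_eq, Set.image_univ, Set.mem_range]
      constructor
      · intro h; exact ⟨⟨j.1, by omega⟩, Fin.ext rfl⟩
      · rintro ⟨x, rfl⟩; exact Nat.lt_succ_iff.mp x.2
    rw [he, Set.ncard_image_of_injective _ (Fin.castLE_injective _), Set.ncard_univ,
      Nat.card_eq_fintype_card, Fintype.card_fin]
  have hCim : ∀ m, m < N → Cn m = g '' {j : Fin N | j.1 ≤ m} := by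
    intro m hm
    have hsub : g '' {j : Fin N | j.1 ≤ m} ⊆ Cn m := by
      rintro _ ⟨j, hj, rfl⟩
      exact hCmono j.1 m hj hm (hgC j)
    refine (Set.eq_of_subset_of_ncard_le hsub ?_ (Set.toFinite _)).symm
    rw [hCcard m hm, Set.ncard_image_of_injective _ hginj, hIic m hm]
  -- conclusion
  refine ⟨σ, fun i => ?_⟩
  have hm : i.1 < N := i.2
  have hTi : T i = T' i.1 := by
    rw [hT'eq i.1 hm]
  have hTm : T' i.1 = (T' i.1 \ shiftSet S ((i.1 : ℤ) + 1)) ∪ shiftSet S ((i.1 : ℤ) + 1) :=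
    (Set.diff_union_of_subset (hub1 i.1 hm)).symm
  rw [hTi, hTm, hCD i.1 hm, hCim i.1 hm]
  unfold mkTuple
  congr 1
  rw [Set.image_image]
  apply Set.image_congr
  intro j _
  have hσg : σ j = g j := rfl
  rw [hσg]
  ring
end

section
/- Fix an integer N > 1. Every mKdV tuple of subsets (S₁,…,S_N) can be transformed to the tuple (ℤ≥0,…,ℤ≥0) by a finite sequence of degree-decreasing mutations: there exist m ≥ 0 and mKdV tuples 𝐒⁰ = (S₁,…,S_N), 𝐒¹, …, 𝐒^m = (ℤ≥0,…,ℤ≥0) such that for each l < m, the tuple 𝐒^{l+1} differs from 𝐒^l in exactly one position i, and the weight of the partition associated to the new i-th entry of 𝐒^{l+1} is strictly smaller than the weight of the partition associated to the i-th entry of 𝐒^l. -/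
/-- The increasing enumeration `s₀ < s₁ < s₂ < …` of a set `S ⊆ ℤ`, when it exists
(it exists and is unique for any set of virtual cardinal zero); junk value otherwise. -/
noncomputable def enumOf (S : Set ℤ) : ℕ → ℤ :=
  letI := Classical.propDecidable (∃ f : ℕ → ℤ, StrictMono f ∧ Set.range f = S)
  if h : ∃ f : ℕ → ℤ, StrictMono f ∧ Set.range f = S then h.choose else fun _ => 0

/-- The weight `|λ| = ∑_i λ_i` of the partition `λ_i = i − s_i` associated to a subset
`S = {s₀ < s₁ < …} ⊆ ℤ` of virtual cardinal zero. -/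
noncomputable def vczWeight (S : Set ℤ) : ℤ :=
  ∑ᶠ i : ℕ, ((i : ℤ) - enumOf S i)

lemma mem_shiftSet {S : Set ℤ} {k x : ℤ} : x ∈ shiftSet S k ↔ x - k ∈ S := by
  constructor
  · rintro ⟨s, hs, rfl⟩; simpa
  · intro h; exact ⟨x - k, h, by ring⟩

lemma shiftSet_shiftSet (S : Set ℤ) (a b : ℤ) :
    shiftSet (shiftSet S a) b = shiftSet S (a + b) := by
  ext x; simp only [mem_shiftSet]
  constructor <;> intro h
  · have : x - (a + b) = x - b - a := by ring
    rwa [this]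
  · have : x - b - a = x - (a + b) := by ring
    rwa [this]

lemma shiftSet_mono {S S' : Set ℤ} (h : S ⊆ S') (k : ℤ) : shiftSet S k ⊆ shiftSet S' k :=
  Set.image_mono h

lemma shiftSet_insert (S : Set ℤ) (x k : ℤ) :
    shiftSet (insert x S) k = insert (x + k) (shiftSet S k) := by
  ext z; simp only [mem_shiftSet, Set.mem_insert_iff, mem_shiftSet]
  constructor <;> intro h <;> rcases h with h | h
  · left; omega
  · right; exact h
  · left; omega
  · right; exact h


lemma vcz_infinite {S : Set ℤ} (h : VirtualCardZero S) : S.Infinite := by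
  have h1 : ({n : ℤ | 0 ≤ n} \ ({n : ℤ | 0 ≤ n} \ S)).Infinite := by
    apply Set.Infinite.diff _ h.2.1
    have : {n : ℤ | 0 ≤ n} = Set.Ici (0:ℤ) := rfl
    rw [this]; exact Set.Ici_infinite _
  apply h1.mono
  intro x hx
  rcases hx with ⟨hx1, hx2⟩
  by_contra hxs
  exact hx2 ⟨hx1, hxs⟩

lemma vcz_bddBelow {S : Set ℤ} (h : VirtualCardZero S) : ∃ B : ℕ, ∀ s ∈ S, -(B:ℤ) ≤ s := by
  obtain ⟨b, hb⟩ := h.1.bddBelow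
  refine ⟨(-b).toNat, fun s hs => ?_⟩
  by_cases h0 : 0 ≤ s
  · omega
  · have := hb ⟨hs, h0⟩; simp at this ⊢; omega

lemma vcz_exists_enum {S : Set ℤ} (h : VirtualCardZero S) :
    ∃ f : ℕ → ℤ, StrictMono f ∧ Set.range f = S := by
  obtain ⟨B, hB⟩ := vcz_bddBelow h
  set p : ℕ → Prop := fun n => ((n : ℤ) - B ∈ S) with hp
  have hsub : S ⊆ Set.range (fun n : ℕ => (n : ℤ) - B) := by
    intro s hs
    refine ⟨(s + B).toNat, ?_⟩
    have := hB s hs; simp; omega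
  have hinf : (setOf p).Infinite := by
    have := (vcz_infinite h).preimage (f := fun n : ℕ => (n : ℤ) - B) hsub
    exact this
  refine ⟨fun n => ((Nat.nth p n : ℕ) : ℤ) - B, ?_, ?_⟩
  · intro m n hmn
    have := (Nat.nth_strictMono hinf) hmn
    simp only []
    omega
  · ext x
    constructor
    · rintro ⟨n, rfl⟩
      have : p (Nat.nth p n) := Nat.nth_mem_of_infinite hinf n
      exact this
    · intro hx
      obtain ⟨n, hn⟩ := hsub hx
      have hpn : p n := by
        show (n:ℤ) - B ∈ S
        have : (n:ℤ) - B = x := hn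
        rw [this]; exact hx
      have : ∃ m, Nat.nth p m = n := by
        rw [← Set.mem_setOf_eq (p := p)] at hpn
        rw [← Nat.range_nth_of_infinite hinf] at hpn
        exact hpn
      obtain ⟨m, hm⟩ := this
      refine ⟨m, ?_⟩
      show ((Nat.nth p m : ℕ) : ℤ) - B = x
      rw [hm]; exact hn

lemma enumOf_spec {S : Set ℤ} (h : VirtualCardZero S) :
    StrictMono (enumOf S) ∧ Set.range (enumOf S) = S := by
  have hex := vcz_exists_enum h
  rw [enumOf, dif_pos hex]
  exact hex.choose_spec


lemma vczWeight_eq {S : Set ℤ} (h : VirtualCardZero S) :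
    vczWeight S = (∑ b ∈ h.2.1.toFinset, b) - (∑ a ∈ h.1.toFinset, a) := by
  obtain ⟨hm, hr⟩ := enumOf_spec h
  set f := enumOf S with hfdef
  set p := h.1.toFinset with hpdef
  set q := h.2.1.toFinset with hqdef
  have hmemp : ∀ x : ℤ, x ∈ p ↔ x ∈ S ∧ ¬ (0 ≤ x) := by
    intro x; rw [hpdef, Set.Finite.mem_toFinset]
    simp [Set.mem_diff, Set.mem_setOf_eq]
  have hmemq : ∀ x : ℤ, x ∈ q ↔ 0 ≤ x ∧ x ∉ S := by
    intro x; rw [hqdef, Set.Finite.mem_toFinset]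
    simp [Set.mem_diff, Set.mem_setOf_eq]
  have hcard : p.card = q.card := by
    have e1 : (S \ {n : ℤ | 0 ≤ n}).ncard = p.card := Set.ncard_eq_toFinset_card _ h.1
    have e2 : ({n : ℤ | 0 ≤ n} \ S).ncard = q.card := Set.ncard_eq_toFinset_card _ h.2.1
    have e3 := h.2.2
    omega
  obtain ⟨c, hc⟩ : ∃ c : ℤ, ∀ b ∈ q, b ≤ c := by
    obtain ⟨c, hc⟩ := q.finite_toSet.bddAbove
    exact ⟨c, fun b hb => hc hb⟩
  set M : ℕ := (c + 1).toNat with hMdef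
  have hM : ∀ b ∈ q, b < (M : ℤ) := by
    intro b hb
    have h0 : 0 ≤ b := ((hmemq b).mp hb).1
    have := hc b hb
    omega
  -- image of initial segments
  have himg : ∀ n : ℕ, ((Finset.range n).image f : Set ℤ) = S ∩ Set.Iio (f n) := by
    intro n; ext x
    simp only [Finset.coe_image, Finset.coe_range, Set.mem_image, Set.mem_Iio,
      Set.mem_inter_iff, Set.mem_Iio]
    constructor
    · rintro ⟨k, hk, rfl⟩
      exact ⟨hr ▸ Set.mem_range_self k, hm hk⟩
    · rintro ⟨hxS, hxlt⟩
      rw [← hr] at hxS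
      obtain ⟨k, rfl⟩ := hxS
      exact ⟨k, hm.lt_iff_lt.mp hxlt, rfl⟩
  set G : Finset ℤ := p ∪ (Finset.Ico (0:ℤ) (M:ℤ) \ q) with hGdef
  have hGset : (G : Set ℤ) = S ∩ Set.Iio (M:ℤ) := by
    ext x
    simp only [hGdef, Finset.coe_union, Set.mem_union, Finset.mem_coe, Finset.mem_sdiff,
      Finset.mem_Ico, Set.mem_inter_iff, Set.mem_Iio]
    constructor
    · rintro (hx | ⟨⟨h0, hlt⟩, hnq⟩)
      · have := (hmemp x).mp hx
        refine ⟨this.1, by omega⟩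
      · have : x ∈ S := by
          by_contra hc1
          exact hnq ((hmemq x).mpr ⟨h0, hc1⟩)
        exact ⟨this, hlt⟩
    · rintro ⟨hxS, hxlt⟩
      by_cases h0 : 0 ≤ x
      · right
        refine ⟨⟨h0, hxlt⟩, fun hq => ((hmemq x).mp hq).2 hxS⟩
      · left; exact (hmemp x).mpr ⟨hxS, h0⟩
  have hq_sub : q ⊆ Finset.Ico (0:ℤ) (M:ℤ) := by
    intro b hb
    rw [Finset.mem_Ico]
    exact ⟨((hmemq b).mp hb).1, hM b hb⟩
  have hdisj : Disjoint p (Finset.Ico (0:ℤ) (M:ℤ) \ q) := by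
    rw [Finset.disjoint_left]
    intro x hx hx2
    have := ((hmemp x).mp hx).2
    have := (Finset.mem_sdiff.mp hx2).1
    rw [Finset.mem_Ico] at this
    omega
  have cardG : G.card = M := by
    rw [hGdef, Finset.card_union_of_disjoint hdisj, Finset.card_sdiff_of_subset hq_sub, Int.card_Ico]
    have hqM : q.card ≤ M := by
      calc q.card ≤ (Finset.Ico (0:ℤ) (M:ℤ)).card := Finset.card_le_card hq_sub
        _ = M := by rw [Int.card_Ico]; omega
    omega
  set F : Finset ℤ := (Finset.range M).image f with hFdef
  have cardF : F.card = M := by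
    rw [hFdef, Finset.card_image_of_injective _ hm.injective, Finset.card_range]
  have hFset : (F : Set ℤ) = S ∩ Set.Iio (f M) := himg M
  -- f M = M
  have hfM : f M = (M : ℤ) := by
    have hMS : (M : ℤ) ∈ S := by
      by_contra hc1
      have : (M:ℤ) ∈ q := (hmemq _).mpr ⟨by positivity, hc1⟩
      have := hM _ this; omega
    rcases lt_trichotomy (f M) (M:ℤ) with hlt | heq | hgt
    · exfalso
      have hfMS : f M ∈ S := hr ▸ Set.mem_range_self M
      have hnotF : f M ∉ F := by
        intro hmem
        have : f M ∈ (F : Set ℤ) := hmem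
        rw [hFset] at this
        have h2 := this.2
        rw [Set.mem_Iio] at h2
        exact absurd h2 (lt_irrefl _)
      have hsub2 : insert (f M) F ⊆ G := by
        intro x hx
        rw [Finset.mem_insert] at hx
        have hx' : x ∈ S ∩ Set.Iio (M:ℤ) := by
          rcases hx with rfl | hx
          · exact ⟨hfMS, hlt⟩
          · have : x ∈ (F : Set ℤ) := hx
            rw [hFset] at this
            exact ⟨this.1, lt_trans this.2 hlt⟩
        rw [← hGset] at hx'
        exact hx'
      have := Finset.card_le_card hsub2
      rw [Finset.card_insert_of_notMem hnotF, cardF, cardG] at this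
      omega
    · exact heq
    · exfalso
      have hnotG : (M:ℤ) ∉ G := by
        intro hmem
        have : (M:ℤ) ∈ (G : Set ℤ) := hmem
        rw [hGset] at this
        have h2 := this.2
        rw [Set.mem_Iio] at h2
        exact absurd h2 (lt_irrefl _)
      have hsub2 : insert (M:ℤ) G ⊆ F := by
        intro x hx
        rw [Finset.mem_insert] at hx
        have hx' : x ∈ S ∩ Set.Iio (f M) := by
          rcases hx with rfl | hx
          · exact ⟨hMS, hgt⟩
          · have : x ∈ (G : Set ℤ) := hx
            rw [hGset] at this
            exact ⟨this.1, lt_trans this.2 hgt⟩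
        rw [← hFset] at hx'
        exact hx'
      have := Finset.card_le_card hsub2
      rw [Finset.card_insert_of_notMem hnotG, cardF, cardG] at this
      omega
  have hfn : ∀ k : ℕ, f (M + k) = (M : ℤ) + k := by
    intro k
    induction k with
    | zero => simpa using hfM
    | succ k ih =>
      have h1 : ((M:ℤ) + k + 1) ∈ S := by
        by_contra hc1
        have : ((M:ℤ) + k + 1) ∈ q := (hmemq _).mpr ⟨by positivity, hc1⟩
        have := hM _ this; omega
      rw [← hr] at h1
      obtain ⟨m, hm2⟩ := h1
      have hmgt : M + k < m := by
        have : f (M + k) < f m := by rw [ih, hm2]; omega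
        exact hm.lt_iff_lt.mp this
      have hle : f (M + (k+1)) ≤ f m := hm.monotone (by omega)
      have hgt : f (M + k) < f (M + (k+1)) := hm (by omega)
      rw [ih] at hgt; rw [hm2] at hle
      push_cast at hle hgt ⊢
      omega
  have hsupp : Function.support (fun i : ℕ => (i:ℤ) - f i) ⊆ ↑(Finset.range M) := by
    intro i hi
    simp only [Finset.coe_range, Set.mem_Iio]
    by_contra hge
    push_neg at hge
    have : f i = (i : ℤ) := by
      have := hfn (i - M)
      have hieq : M + (i - M) = i := by omega
      rw [hieq] at this
      rw [this]; push_cast; omega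
    apply hi
    simp [this]
  have hIco : ∀ m : ℕ, ∑ x ∈ Finset.Ico (0:ℤ) (m:ℤ), x = ∑ i ∈ Finset.range m, (i:ℤ) := by
    intro m
    induction m with
    | zero => simp
    | succ k ih =>
      have hins : Finset.Ico (0:ℤ) ((k+1:ℕ):ℤ) = insert (k:ℤ) (Finset.Ico (0:ℤ) (k:ℤ)) := by
        ext x
        simp only [Finset.mem_Ico, Finset.mem_insert]
        push_cast
        omega
      have hnot : (k:ℤ) ∉ Finset.Ico (0:ℤ) (k:ℤ) := by
        simp [Finset.mem_Ico]
      rw [hins, Finset.sum_insert hnot, ih, Finset.sum_range_succ]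
      ring
  have step1 : vczWeight S = ∑ i ∈ Finset.range M, ((i:ℤ) - f i) := by
    rw [vczWeight]
    exact finsum_eq_sum_of_support_subset _ hsupp
  have step2 : ∑ i ∈ Finset.range M, f i = ∑ x ∈ F, x := by
    rw [hFdef]
    rw [Finset.sum_image (fun x _ y _ hxy => hm.injective hxy)]
  have hFG : F = G := by
    apply Finset.coe_injective
    rw [hFset, hGset, hfM]
  have step3 : ∑ x ∈ G, x = (∑ a ∈ p, a) + ((∑ x ∈ Finset.Ico (0:ℤ) (M:ℤ), x) - ∑ b ∈ q, b) := by
    rw [hGdef, Finset.sum_union hdisj, Finset.sum_sdiff_eq_sub hq_sub]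
  rw [step1, Finset.sum_sub_distrib, step2, hFG, step3, hIco M]
  ring

lemma vcz_card_eq {S : Set ℤ} (h : VirtualCardZero S) :
    h.1.toFinset.card = h.2.1.toFinset.card := by
  have e1 : (S \ {n : ℤ | 0 ≤ n}).ncard = h.1.toFinset.card := Set.ncard_eq_toFinset_card _ h.1
  have e2 : ({n : ℤ | 0 ≤ n} \ S).ncard = h.2.1.toFinset.card := Set.ncard_eq_toFinset_card _ h.2.1
  have e3 := h.2.2
  omega

lemma vczWeight_nonneg {S : Set ℤ} (h : VirtualCardZero S) : 0 ≤ vczWeight S := by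
  rw [vczWeight_eq h]
  have h1 : 0 ≤ ∑ b ∈ h.2.1.toFinset, b := by
    apply Finset.sum_nonneg
    intro b hb
    rw [Set.Finite.mem_toFinset] at hb
    exact hb.1
  have h2 : ∑ a ∈ h.1.toFinset, a ≤ 0 := by
    apply Finset.sum_nonpos
    intro a ha
    rw [Set.Finite.mem_toFinset] at ha
    have := ha.2
    simp only [Set.mem_setOf_eq] at this
    omega
  omega

lemma vcz_eq_of_weight_zero {S : Set ℤ} (h : VirtualCardZero S) (h0 : vczWeight S = 0) :
    S = {n : ℤ | 0 ≤ n} := by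
  rw [vczWeight_eq h] at h0
  have hple : ∑ a ∈ h.1.toFinset, a ≤ -(h.1.toFinset.card : ℤ) := by
    calc ∑ a ∈ h.1.toFinset, a ≤ ∑ _a ∈ h.1.toFinset, (-1 : ℤ) := by
          apply Finset.sum_le_sum
          intro a ha
          rw [Set.Finite.mem_toFinset] at ha
          have := ha.2
          simp only [Set.mem_setOf_eq] at this
          omega
      _ = -(h.1.toFinset.card : ℤ) := by simp
  have hqge : 0 ≤ ∑ b ∈ h.2.1.toFinset, b := by
    apply Finset.sum_nonneg
    intro b hb
    rw [Set.Finite.mem_toFinset] at hb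
    exact hb.1
  have hcard := vcz_card_eq h
  have hp0 : h.1.toFinset.card = 0 := by omega
  have hq0 : h.2.1.toFinset.card = 0 := by omega
  have hpe : S \ {n : ℤ | 0 ≤ n} = ∅ := by
    have := Finset.card_eq_zero.mp hp0
    rwa [Set.Finite.toFinset_eq_empty] at this
  have hqe : {n : ℤ | 0 ≤ n} \ S = ∅ := by
    have := Finset.card_eq_zero.mp hq0
    rwa [Set.Finite.toFinset_eq_empty] at this
  apply Set.Subset.antisymm
  · intro x hx
    by_contra hc
    rw [Set.eq_empty_iff_forall_notMem] at hpe
    exact hpe x ⟨hx, hc⟩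
  · intro x hx
    by_contra hc
    rw [Set.eq_empty_iff_forall_notMem] at hqe
    exact hqe x ⟨hx, hc⟩

lemma vcz_nonneg_set : VirtualCardZero {n : ℤ | 0 ≤ n} := by
  refine ⟨?_, ?_, ?_⟩ <;> simp

lemma vczWeight_nonneg_set : vczWeight {n : ℤ | 0 ≤ n} = 0 := by
  rw [vczWeight_eq vcz_nonneg_set]
  have h1 : vcz_nonneg_set.1.toFinset = ∅ := by
    rw [Set.Finite.toFinset_eq_empty]; simp
  have h2 : vcz_nonneg_set.2.1.toFinset = ∅ := by
    rw [Set.Finite.toFinset_eq_empty]; simp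
  rw [h1]
  simp

open scoped Classical in
lemma vczWeight_formula_g {S : Set ℤ} (h : VirtualCardZero S) (u : Finset ℤ)
    (hpu : h.1.toFinset ⊆ u) (hqu : h.2.1.toFinset ⊆ u) :
    vczWeight S = ∑ n ∈ u, (if n ∈ S then (if n < 0 then -n else 0)
      else (if 0 ≤ n then n else 0)) := by
  classical
  set g : ℤ → ℤ := fun n => if n ∈ S then (if n < 0 then -n else 0)
      else (if 0 ≤ n then n else 0) with hg
  set p := h.1.toFinset with hpdef
  set q := h.2.1.toFinset with hqdef
  have hmemp : ∀ x : ℤ, x ∈ p ↔ x ∈ S ∧ ¬ (0 ≤ x) := by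
    intro x; rw [hpdef, Set.Finite.mem_toFinset]
    simp [Set.mem_diff, Set.mem_setOf_eq]
  have hmemq : ∀ x : ℤ, x ∈ q ↔ 0 ≤ x ∧ x ∉ S := by
    intro x; rw [hqdef, Set.Finite.mem_toFinset]
    simp [Set.mem_diff, Set.mem_setOf_eq]
  have hsub : p ∪ q ⊆ u := Finset.union_subset hpu hqu
  have hzero : ∀ n ∈ u, n ∉ p ∪ q → g n = 0 := by
    intro n _ hn
    rw [Finset.mem_union] at hn
    push_neg at hn
    obtain ⟨hnp, hnq⟩ := hn
    rw [hg]
    by_cases hns : n ∈ S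
    · have h0 : 0 ≤ n := by
        by_contra hc
        exact hnp ((hmemp n).mpr ⟨hns, hc⟩)
      simp [hns]
      omega
    · have h0 : ¬ (0 ≤ n) := by
        intro hc
        exact hnq ((hmemq n).mpr ⟨hc, hns⟩)
      simp [hns, h0]
  have hdisj : Disjoint p q := by
    rw [Finset.disjoint_left]
    intro a hap haq
    exact ((hmemq a).mp haq).2 ((hmemp a).mp hap).1
  have e1 : ∑ n ∈ u, g n = ∑ n ∈ p ∪ q, g n := (Finset.sum_subset hsub (fun n h1 h2 => hzero n h1 h2)).symm
  have e2 : ∑ n ∈ p ∪ q, g n = (∑ n ∈ p, g n) + ∑ n ∈ q, g n := Finset.sum_union hdisj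
  have e3 : ∑ n ∈ p, g n = -∑ a ∈ p, a := by
    rw [← Finset.sum_neg_distrib]
    apply Finset.sum_congr rfl
    intro n hn
    obtain ⟨hns, hn0⟩ := (hmemp n).mp hn
    rw [hg]
    simp only [hns, if_true]
    rw [if_pos (by omega)]
  have e4 : ∑ n ∈ q, g n = ∑ b ∈ q, b := by
    apply Finset.sum_congr rfl
    intro n hn
    obtain ⟨hn0, hns⟩ := (hmemq n).mp hn
    rw [hg]
    simp only [hns, if_false, hn0, if_true]
  rw [vczWeight_eq h, ← hpdef, ← hqdef]
  show (∑ b ∈ q, b) - (∑ a ∈ p, a) = ∑ n ∈ u, g n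
  rw [e1, e2, e3, e4]
  ring

open scoped Classical in
lemma vczWeight_swap {S : Set ℤ} (h : VirtualCardZero S) {x x' : ℤ}
    (hx : x ∈ S) (hx' : x' ∉ S) (h' : VirtualCardZero (insert x' (S \ {x}))) :
    vczWeight (insert x' (S \ {x})) = vczWeight S + x - x' := by
  classical
  set S' := insert x' (S \ {x}) with hS'
  have hxx' : x ≠ x' := fun he => hx' (he ▸ hx)
  have hxS' : x ∉ S' := by
    rw [hS']
    simp [Set.mem_insert_iff, hxx']
  have hx'S' : x' ∈ S' := by rw [hS']; exact Set.mem_insert _ _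
  set u : Finset ℤ := ((h.1.toFinset ∪ h.2.1.toFinset) ∪ (h'.1.toFinset ∪ h'.2.1.toFinset)) ∪ {x, x'} with hu
  have hw1 := vczWeight_formula_g h u (by intro a ha; rw [hu]; simp [ha]) (by intro a ha; rw [hu]; simp [ha])
  have hw2 := vczWeight_formula_g h' u (by intro a ha; rw [hu]; simp [ha]) (by intro a ha; rw [hu]; simp [ha])
  have hdiff : vczWeight S' - vczWeight S =
      ∑ n ∈ u, ((if n ∈ S' then (if n < 0 then -n else 0) else (if 0 ≤ n then n else 0))
        - (if n ∈ S then (if n < 0 then -n else 0) else (if 0 ≤ n then n else 0))) := by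
    rw [hw1, hw2, ← Finset.sum_sub_distrib]
    exact Finset.sum_congr rfl (fun n _ => by split_ifs <;> rfl)
  have hsub : ({x, x'} : Finset ℤ) ⊆ u := by
    intro a ha; rw [hu]; simp only [Finset.mem_insert, Finset.mem_singleton] at ha
    simp only [Finset.mem_union, Finset.mem_insert, Finset.mem_singleton]
    tauto
  have hzero : ∀ n ∈ u, n ∉ ({x, x'} : Finset ℤ) →
      ((if n ∈ S' then (if n < 0 then -n else 0) else (if 0 ≤ n then n else 0))
        - (if n ∈ S then (if n < 0 then -n else 0) else (if 0 ≤ n then n else 0))) = 0 := by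
    intro n _ hn
    simp only [Finset.mem_insert, Finset.mem_singleton] at hn
    push_neg at hn
    have : n ∈ S' ↔ n ∈ S := by
      rw [hS']
      simp [Set.mem_insert_iff, Set.mem_diff, hn.1, hn.2]
    by_cases hns : n ∈ S
    · rw [if_pos (this.mpr hns), if_pos hns]; ring
    · rw [if_neg (fun hc => hns (this.mp hc)), if_neg hns]; ring
  have hsum : ∑ n ∈ u, ((if n ∈ S' then (if n < 0 then -n else 0) else (if 0 ≤ n then n else 0))
        - (if n ∈ S then (if n < 0 then -n else 0) else (if 0 ≤ n then n else 0)))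
      = ∑ n ∈ ({x, x'} : Finset ℤ), ((if n ∈ S' then (if n < 0 then -n else 0) else (if 0 ≤ n then n else 0))
        - (if n ∈ S then (if n < 0 then -n else 0) else (if 0 ≤ n then n else 0))) :=
    (Finset.sum_subset hsub hzero).symm
  have hpair : ∑ n ∈ ({x, x'} : Finset ℤ), ((if n ∈ S' then (if n < 0 then -n else 0) else (if 0 ≤ n then n else 0))
        - (if n ∈ S then (if n < 0 then -n else 0) else (if 0 ≤ n then n else 0))) = x - x' := by
    rw [Finset.sum_pair hxx']
    rw [if_neg hxS', if_pos hx, if_pos hx'S', if_neg hx']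
    split_ifs <;> omega
  have hfin : vczWeight S' - vczWeight S = x - x' := by rw [hdiff, hsum, hpair]
  omega

/-- Virtual cardinal `-1`. -/
def VczMinusOne (S : Set ℤ) : Prop :=
  (S \ {n : ℤ | 0 ≤ n}).Finite ∧ ({n : ℤ | 0 ≤ n} \ S).Finite ∧
    ({n : ℤ | 0 ≤ n} \ S).ncard = (S \ {n : ℤ | 0 ≤ n}).ncard + 1

lemma add_one_injective : Function.Injective (fun s : ℤ => s + 1) := by
  intro a b hab
  simpa using hab

lemma vcz_shift_one {S : Set ℤ} (h : VirtualCardZero S) : VczMinusOne (shiftSet S 1) := by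
  set T := shiftSet S 1 with hT
  have hmemT : ∀ x : ℤ, x ∈ T ↔ x - 1 ∈ S := fun x => mem_shiftSet
  by_cases hm1 : (-1 : ℤ) ∈ S
  · have e1 : T \ {n : ℤ | 0 ≤ n} = (fun s => s + 1) '' ((S \ {n : ℤ | 0 ≤ n}) \ {-1}) := by
      ext x
      simp only [Set.mem_diff, Set.mem_setOf_eq, Set.mem_image, Set.mem_singleton_iff, hmemT]
      constructor
      · rintro ⟨hx1, hx2⟩
        exact ⟨x - 1, ⟨⟨hx1, by omega⟩, by omega⟩, by ring⟩
      · rintro ⟨s, ⟨⟨hs1, hs2⟩, hs3⟩, rfl⟩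
        exact ⟨by simpa using hs1, by omega⟩
    have e2 : {n : ℤ | 0 ≤ n} \ T = (fun s => s + 1) '' ({n : ℤ | 0 ≤ n} \ S) := by
      ext x
      simp only [Set.mem_diff, Set.mem_setOf_eq, Set.mem_image, hmemT]
      constructor
      · rintro ⟨hx1, hx2⟩
        refine ⟨x - 1, ⟨?_, hx2⟩, by ring⟩
        by_contra hc
        have : x = 0 := by omega
        rw [this] at hx2
        exact hx2 (by simpa using hm1)
      · rintro ⟨b, ⟨hb1, hb2⟩, rfl⟩
        exact ⟨by omega, by simpa using hb2⟩
    have hmem : (-1 : ℤ) ∈ S \ {n : ℤ | 0 ≤ n} := ⟨hm1, by simp⟩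
    refine ⟨?_, ?_, ?_⟩
    · rw [e1]; exact ((h.1.subset Set.diff_subset).image _)
    · rw [e2]; exact h.2.1.image _
    · rw [e1, e2, Set.ncard_image_of_injective _ add_one_injective,
        Set.ncard_image_of_injective _ add_one_injective]
      have := Set.ncard_diff_singleton_add_one hmem h.1
      have h22 := h.2.2
      omega
  · have e1 : T \ {n : ℤ | 0 ≤ n} = (fun s => s + 1) '' (S \ {n : ℤ | 0 ≤ n}) := by
      ext x
      simp only [Set.mem_diff, Set.mem_setOf_eq, Set.mem_image, hmemT]
      constructor
      · rintro ⟨hx1, hx2⟩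
        exact ⟨x - 1, ⟨hx1, by omega⟩, by ring⟩
      · rintro ⟨s, ⟨hs1, hs2⟩, rfl⟩
        refine ⟨by simpa using hs1, ?_⟩
        have : s ≠ -1 := fun he => hm1 (he ▸ hs1)
        omega
    have e2 : {n : ℤ | 0 ≤ n} \ T = insert 0 ((fun s => s + 1) '' ({n : ℤ | 0 ≤ n} \ S)) := by
      ext x
      simp only [Set.mem_diff, Set.mem_setOf_eq, Set.mem_insert_iff, Set.mem_image, hmemT]
      constructor
      · rintro ⟨hx1, hx2⟩
        by_cases hx0 : x = 0
        · left; exact hx0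
        · right; exact ⟨x - 1, ⟨by omega, hx2⟩, by ring⟩
      · rintro (rfl | ⟨b, ⟨hb1, hb2⟩, rfl⟩)
        · exact ⟨le_refl 0, by simpa using hm1⟩
        · refine ⟨?_, ?_⟩
          · show (0:ℤ) ≤ b + 1
            omega
          · show ¬ (b + 1 - 1 ∈ S)
            simpa using hb2
    have h0not : (0 : ℤ) ∉ (fun s => s + 1) '' ({n : ℤ | 0 ≤ n} \ S) := by
      rintro ⟨b, ⟨hb1, _⟩, hb3⟩
      simp only [Set.mem_setOf_eq] at hb1
      have : b + 1 = 0 := hb3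
      omega
    refine ⟨?_, ?_, ?_⟩
    · rw [e1]; exact h.1.image _
    · rw [e2]; exact ((h.2.1.image _).insert 0)
    · rw [e1, e2, Set.ncard_insert_of_notMem h0not (h.2.1.image _),
        Set.ncard_image_of_injective _ add_one_injective,
        Set.ncard_image_of_injective _ add_one_injective]
      have h22 := h.2.2
      omega

lemma vcz_insert {B : Set ℤ} (h : VczMinusOne B) {x : ℤ} (hx : x ∉ B) :
    VirtualCardZero (insert x B) := by
  by_cases h0 : 0 ≤ x
  · have e1 : insert x B \ {n : ℤ | 0 ≤ n} = B \ {n : ℤ | 0 ≤ n} := by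
      ext z
      simp only [Set.mem_diff, Set.mem_insert_iff, Set.mem_setOf_eq]
      constructor
      · rintro ⟨rfl | hz, hz2⟩
        · omega
        · exact ⟨hz, hz2⟩
      · rintro ⟨hz, hz2⟩
        exact ⟨Or.inr hz, hz2⟩
    have e2 : {n : ℤ | 0 ≤ n} \ insert x B = ({n : ℤ | 0 ≤ n} \ B) \ {x} := by
      ext z
      simp only [Set.mem_diff, Set.mem_insert_iff, Set.mem_setOf_eq, Set.mem_singleton_iff]
      tauto
    have hmem : x ∈ {n : ℤ | 0 ≤ n} \ B := ⟨h0, hx⟩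
    refine ⟨?_, ?_, ?_⟩
    · rw [e1]; exact h.1
    · rw [e2]; exact h.2.1.subset Set.diff_subset
    · rw [e1, e2]
      have := Set.ncard_diff_singleton_add_one hmem h.2.1
      have h22 := h.2.2
      omega
  · have e1 : insert x B \ {n : ℤ | 0 ≤ n} = insert x (B \ {n : ℤ | 0 ≤ n}) := by
      ext z
      simp only [Set.mem_diff, Set.mem_insert_iff, Set.mem_setOf_eq]
      constructor
      · rintro ⟨rfl | hz, hz2⟩
        · left; rfl
        · right; exact ⟨hz, hz2⟩
      · rintro (rfl | ⟨hz, hz2⟩)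
        · exact ⟨Or.inl rfl, h0⟩
        · exact ⟨Or.inr hz, hz2⟩
    have e2 : {n : ℤ | 0 ≤ n} \ insert x B = {n : ℤ | 0 ≤ n} \ B := by
      ext z
      simp only [Set.mem_diff, Set.mem_insert_iff, Set.mem_setOf_eq]
      constructor
      · rintro ⟨hz, hz2⟩
        exact ⟨hz, fun hc => hz2 (Or.inr hc)⟩
      · rintro ⟨hz, hz2⟩
        refine ⟨hz, ?_⟩
        rintro (rfl | hc)
        · omega
        · exact hz2 hc
    have hxnot : x ∉ B \ {n : ℤ | 0 ≤ n} := fun hc => hx hc.1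
    refine ⟨?_, ?_, ?_⟩
    · rw [e1]; exact h.1.insert x
    · rw [e2]; exact h.2.1
    · rw [e1, e2, Set.ncard_insert_of_notMem hxnot h.1]
      have h22 := h.2.2
      omega

lemma exists_insert_of_vcz {A B : Set ℤ} (hA : VirtualCardZero A) (hB : VczMinusOne B)
    (hBA : B ⊆ A) : ∃ y : ℤ, y ∉ B ∧ A = insert y B := by
  set NN : Set ℤ := {n : ℤ | 0 ≤ n} with hNN
  have hd1 : (A \ NN) \ (B \ NN) ⊆ A \ NN := Set.diff_subset
  have hsubBA : B \ NN ⊆ A \ NN := fun x hx => ⟨hBA hx.1, hx.2⟩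
  have hsubAB : NN \ A ⊆ NN \ B := fun x hx => ⟨hx.1, fun hc => hx.2 (hBA hc)⟩
  have hdecomp : A \ B = ((A \ NN) \ (B \ NN)) ∪ ((NN \ B) \ (NN \ A)) := by
    ext x
    simp only [Set.mem_diff, Set.mem_union, hNN, Set.mem_setOf_eq]
    constructor
    · rintro ⟨hxA, hxB⟩
      by_cases h0 : 0 ≤ x
      · right; exact ⟨⟨h0, hxB⟩, fun hc => hc.2 hxA⟩
      · left; exact ⟨⟨hxA, h0⟩, fun hc => hxB hc.1⟩
    · rintro (⟨⟨hxA, h0⟩, hnB⟩ | ⟨⟨h0, hxB⟩, hnA⟩)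
      · refine ⟨hxA, fun hc => hnB ⟨hc, h0⟩⟩
      · refine ⟨?_, hxB⟩
        by_contra hc
        exact hnA ⟨h0, hc⟩
    
  have hfin1 : ((A \ NN) \ (B \ NN)).Finite := hA.1.subset Set.diff_subset
  have hfin2 : ((NN \ B) \ (NN \ A)).Finite := hB.2.1.subset Set.diff_subset
  have hdisj : Disjoint ((A \ NN) \ (B \ NN)) ((NN \ B) \ (NN \ A)) := by
    rw [Set.disjoint_left]
    rintro x ⟨⟨_, hx2⟩, _⟩ ⟨⟨hx3, _⟩, _⟩
    exact hx2 hx3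
  have hc1 : ((A \ NN) \ (B \ NN)).ncard = (A \ NN).ncard - (B \ NN).ncard :=
    Set.ncard_diff hsubBA (hA.1.subset hsubBA)
  have hc2 : ((NN \ B) \ (NN \ A)).ncard = (NN \ B).ncard - (NN \ A).ncard :=
    Set.ncard_diff hsubAB (hB.2.1.subset hsubAB)
  have hle1 : (B \ NN).ncard ≤ (A \ NN).ncard := Set.ncard_le_ncard hsubBA hA.1
  have hle2 : (NN \ A).ncard ≤ (NN \ B).ncard := Set.ncard_le_ncard hsubAB hB.2.1
  have hcardAB : (A \ B).ncard = 1 := by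
    rw [hdecomp, Set.ncard_union_eq hdisj hfin1 hfin2, hc1, hc2]
    have hA22 := hA.2.2
    have hB22 := hB.2.2
    rw [← hNN] at hA22 hB22
    omega
  obtain ⟨y, hy⟩ := Set.ncard_eq_one.mp hcardAB
  refine ⟨y, ?_, ?_⟩
  · have : y ∈ A \ B := by rw [hy]; rfl
    exact this.2
  · ext x
    simp only [Set.mem_insert_iff]
    constructor
    · intro hxA
      by_cases hxB : x ∈ B
      · right; exact hxB
      · left
        have : x ∈ A \ B := ⟨hxA, hxB⟩
        rw [hy] at this
        exact this
    · intro hor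
      rcases hor with heq | hxB
      · subst heq
        have : x ∈ A \ B := by rw [hy]; rfl
        exact this.1
      · exact hBA hxB



lemma shiftSet_zero (S : Set ℤ) : shiftSet S 0 = S := by
  ext x; rw [mem_shiftSet]; simp

lemma shiftSet_nonneg_subset (k : ℤ) (hk : 0 ≤ k) :
    shiftSet {n : ℤ | 0 ≤ n} k ⊆ {n : ℤ | 0 ≤ n} := by
  intro x hx
  rw [mem_shiftSet] at hx
  simp only [Set.mem_setOf_eq] at hx ⊢
  omega

lemma trivial_mkdv (N : ℕ) [NeZero N] : IsMKdVTuple N (fun _ => {n : ℤ | 0 ≤ n}) := by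
  constructor
  · intro i
    exact ⟨vcz_nonneg_set, shiftSet_nonneg_subset _ (by positivity)⟩
  · intro i
    exact shiftSet_nonneg_subset _ (by norm_num)

open scoped Fin.NatCast Fin.CommRing in
lemma mkdv_chain {N : ℕ} [NeZero N] {T : Fin N → Set ℤ} (hT : IsMKdVTuple N T) :
    ∀ (i : Fin N) (k : ℕ), shiftSet (T i) (k : ℤ) ⊆ T (i + (k : Fin N)) := by
  intro i k
  induction k with
  | zero => simp [shiftSet_zero]
  | succ k ih =>
    have e1 : shiftSet (T i) ((k+1 : ℕ) : ℤ) = shiftSet (shiftSet (T i) (k:ℤ)) 1 := by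
      rw [shiftSet_shiftSet]
      norm_num
    rw [e1]
    have h2 : shiftSet (shiftSet (T i) (k:ℤ)) 1 ⊆ shiftSet (T (i + (k : Fin N))) 1 :=
      shiftSet_mono ih 1
    have h3 : shiftSet (T (i + (k : Fin N))) 1 ⊆ T (i + (k : Fin N) + 1) := hT.2 _
    have h4 : i + (k : Fin N) + 1 = i + ((k + 1 : ℕ) : Fin N) := by
      push_cast
      ring
    rw [h4] at h3
    exact fun x hx => h3 (h2 hx)

lemma fin_one_ne_zero (N : ℕ) [NeZero N] (hN : 1 < N) : (1 : Fin N) ≠ 0 := by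
  intro h
  have h1 : (1 : Fin N).val = 1 := by rw [Fin.val_one']; exact Nat.mod_eq_of_lt hN
  rw [h] at h1
  simp at h1

open scoped Fin.NatCast Fin.CommRing in
lemma mkdv_step (N : ℕ) [NeZero N] (hN : 1 < N) (T : Fin N → Set ℤ) (hT : IsMKdVTuple N T)
    (hnt : T ≠ fun _ => {n : ℤ | 0 ≤ n}) :
    ∃ (i : Fin N) (S' : Set ℤ), IsMKdVTuple N (Function.update T i S') ∧ S' ≠ T i ∧
      vczWeight S' < vczWeight (T i) := by
  classical
  have hyex : ∀ i : Fin N, ∃ y : ℤ, y ∉ shiftSet (T i) 1 ∧ T (i+1) = insert y (shiftSet (T i) 1) := by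
    intro i
    have hB := vcz_shift_one (hT.1 i).1
    have hA := (hT.1 (i+1)).1
    obtain ⟨y, h1, h2⟩ := exists_insert_of_vcz hA hB (hT.2 i)
    exact ⟨y, h1, h2⟩
  choose y hy1 hy2 using hyex
  have hymem : ∀ i : Fin N, y i ∈ T (i + 1) := by
    intro i; rw [hy2 i]; exact Set.mem_insert _ _
  have hne : ∀ i : Fin N, y i + 1 ≠ y (i+1) := by
    intro i heq
    apply hy1 (i+1)
    rw [← heq, mem_shiftSet]
    simpa using hymem i
  by_cases hcase : ∃ i : Fin N, y i < y (i+1)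
  · obtain ⟨i, hilt⟩ := hcase
    set B : Set ℤ := shiftSet (T i) 1 with hB
    set x : ℤ := y i with hx
    set x' : ℤ := y (i+1) - 1 with hx'
    have hxx' : x < x' := by
      have := hne i
      rw [hx, hx']
      omega
    have hx'B : x' ∉ B := by
      intro hc
      apply hy1 (i+1)
      have h1 : x' + 1 ∈ shiftSet B 1 := by
        rw [mem_shiftSet]; simpa using hc
      have h2 : shiftSet B 1 ⊆ shiftSet (T (i+1)) 1 := by
        rw [hB]
        exact shiftSet_mono (hT.2 i) 1
      have := h2 h1
      rw [hx'] at this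
      simpa using this
    set S' : Set ℤ := insert x' B with hS'
    have hxB : x ∉ B := hy1 i
    have hTp : T (i+1) = insert x B := hy2 i
    have hBdiff : T (i+1) \ {x} = B := by
      rw [hTp, Set.insert_diff_self_of_notMem hxB]
    have hxTp : x ∈ T (i+1) := hymem i
    have hx'Tp : x' ∉ T (i+1) := by
      rw [hTp]
      intro hc
      rcases hc with hc | hc
      · omega
      · exact hx'B hc
    have hvczB : VczMinusOne B := vcz_shift_one (hT.1 i).1
    have hvczS' : VirtualCardZero S' := vcz_insert hvczB hx'B
    have hS'eq : S' = insert x' (T (i+1) \ {x}) := by rw [hBdiff]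
    -- weight decrease
    have hweight : vczWeight S' < vczWeight (T (i+1)) := by
      have := vczWeight_swap (hT.1 (i+1)).1 hxTp hx'Tp (hS'eq ▸ hvczS')
      rw [← hS'eq] at this
      rw [this]
      omega
    -- S' ≠ T (i+1)
    have hSne : S' ≠ T (i+1) := by
      intro hc
      have : x ∈ S' := hc.symm ▸ hxTp
      rcases this with h1 | h1
      · omega
      · exact hxB h1
    -- KdV property of S'
    have hchain : x' + N ∈ B := by
      set k : ℕ := N - 2 with hk
      have hk2 : k + 2 = N := by omega
      have hidx : (i + 1 + 1) + (k : Fin N) = i := by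
        have h0 : ((k : Fin N) + 2) = 0 := by
          have : (((k + 2 : ℕ)) : Fin N) = 0 := by rw [hk2]; exact Fin.natCast_self N
          push_cast at this
          convert this using 1
        have : i + 1 + 1 + (k : Fin N) = i + ((k : Fin N) + 2) := by ring
        rw [this, h0, add_zero]
      have hy' : y (i+1) ∈ T (i+1+1) := hymem (i+1)
      have hmem2 : y (i+1) + (k : ℤ) ∈ shiftSet (T (i+1+1)) (k : ℤ) := by
        rw [mem_shiftSet]; simpa using hy'
      have := mkdv_chain hT (i+1+1) k hmem2
      rw [hidx] at this
      rw [hB, mem_shiftSet]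
      have hval : x' + N - 1 = y (i+1) + (k:ℤ) := by
        rw [hx']
        have : (k : ℤ) = (N : ℤ) - 2 := by
          have := hk2
          push_cast
          omega
        omega
      rw [hval]
      exact this
    have hKdVS' : IsKdV N S' := by
      refine ⟨hvczS', ?_⟩
      rw [hS', shiftSet_insert]
      intro z hz
      rcases hz with hz | hz
      · subst hz
        right
        exact hchain
      · right
        have e1 : shiftSet B (N:ℤ) = shiftSet (shiftSet (T i) (N:ℤ)) 1 := by
          rw [hB, shiftSet_shiftSet, shiftSet_shiftSet]
          ring_nf
        rw [e1] at hz
        have := shiftSet_mono (hT.1 i).2 1 hz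
        rwa [← hB] at this
    -- the updated tuple is mKdV
    have hp1 : i + 1 + 1 ≠ i + 1 := by
      intro hc
      have hc2 : (i + 1) + 1 = (i + 1) + 0 := by rw [add_zero]; exact hc
      exact fin_one_ne_zero N hN (add_left_cancel hc2)
    refine ⟨i + 1, S', ⟨?_, ?_⟩, hSne, hweight⟩
    · intro j
      by_cases hj : j = i + 1
      · subst hj
        rw [Function.update_self]
        exact hKdVS'
      · rw [Function.update_of_ne hj]
        exact hT.1 j
    · intro j
      by_cases hj : j = i + 1
      · subst hj
        rw [Function.update_self, Function.update_of_ne hp1]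
        rw [hS', shiftSet_insert]
        intro z hz
        rcases hz with hz | hz
        · subst hz
          have : x' + 1 = y (i+1) := by rw [hx']; ring
          rw [this]
          exact hymem (i+1)
        · have e1 : shiftSet B 1 ⊆ shiftSet (T (i+1)) 1 := by
            rw [hB]; exact shiftSet_mono (hT.2 i) 1
          exact hT.2 (i+1) (e1 hz)
      · by_cases hj1 : j + 1 = i + 1
        · have hji : j = i := add_right_cancel hj1
          subst hji
          rw [Function.update_of_ne hj, hj1, Function.update_self]
          rw [hS', hB]
          exact fun z hz => Set.mem_insert_of_mem _ hz
        · rw [Function.update_of_ne hj, Function.update_of_ne hj1]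
          exact hT.2 j
  · exfalso
    push_neg at hcase
    -- y is cyclically non-increasing, hence constant
    set z : ℕ → ℤ := fun k => y ((k : ℕ) : Fin N) with hz
    have hzstep : ∀ k : ℕ, z (k+1) ≤ z k := by
      intro k
      have := hcase ((k : ℕ) : Fin N)
      have hcast : (((k+1 : ℕ)) : Fin N) = ((k : ℕ) : Fin N) + 1 := by push_cast; ring
      rw [hz]
      simp only []
      rw [hcast]
      exact this
    have hzanti : ∀ a b : ℕ, a ≤ b → z b ≤ z a := by
      intro a b hab
      induction b with
      | zero => have : a = 0 := by omega
                subst this; exact le_refl _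
      | succ b ih =>
        by_cases hab2 : a = b + 1
        · subst hab2; exact le_refl _
        · have : a ≤ b := by omega
          exact le_trans (hzstep b) (ih this)
    have hzN : z N = z 0 := by
      rw [hz]
      simp only []
      congr 1
      rw [Fin.natCast_self]
      norm_num
    have hconst : ∀ i : Fin N, y i = y ((0:ℕ) : Fin N) := by
      intro i
      have h1 : z i.val ≤ z 0 := hzanti 0 i.val (by omega)
      have h2 : z N ≤ z i.val := hzanti i.val N (le_of_lt i.isLt)
      rw [hzN] at h2
      have h3 : z i.val = z 0 := le_antisymm h1 h2
      have h4 : ((i.val : ℕ) : Fin N) = i := Fin.cast_val_eq_self i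
      rw [hz] at h3
      simp only [] at h3
      rw [h4] at h3
      exact h3
    set c : ℤ := y ((0:ℕ) : Fin N) with hc
    -- every T j contains c + k for all k
    have hTj : ∀ j : Fin N, T j = insert c (shiftSet (T (j - 1)) 1) := by
      intro j
      have := hy2 (j - 1)
      rw [sub_add_cancel] at this
      rw [this, hconst (j-1)]
    have hup : ∀ (k : ℕ) (j : Fin N), c + k ∈ T j := by
      intro k
      induction k with
      | zero =>
        intro j
        rw [hTj j]
        norm_num
      | succ k ih =>
        intro j
        rw [hTj j]
        right
        rw [mem_shiftSet]
        have : c + (k+1 : ℕ) - 1 = c + k := by push_cast; ring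
        rw [this]
        exact ih (j - 1)
    -- uniform lower bound
    obtain ⟨b, hb⟩ : ∃ b : ℤ, ∀ (j : Fin N) (t : ℤ), t ∈ T j → b ≤ t := by
      have hbj : ∀ j : Fin N, ∃ Bj : ℕ, ∀ s ∈ T j, -(Bj:ℤ) ≤ s := fun j => vcz_bddBelow (hT.1 j).1
      choose Bj hBj using hbj
      refine ⟨-((Finset.univ.sup Bj : ℕ) : ℤ), ?_⟩
      intro j t ht
      have h1 := hBj j t ht
      have h2 : Bj j ≤ Finset.univ.sup Bj := Finset.le_sup (Finset.mem_univ j)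
      have h3 : ((Bj j : ℕ) : ℤ) ≤ ((Finset.univ.sup Bj : ℕ) : ℤ) := by exact_mod_cast h2
      omega
    -- descending argument: no element below c
    have hdown : ∀ (k : ℕ) (j : Fin N) (t : ℤ), t ∈ T j → t < c →
        t - k ∈ T (j - (k : Fin N)) ∧ t - (k:ℤ) < c := by
      intro k
      induction k with
      | zero =>
        intro j t ht htc
        constructor
        · have : ((0:ℕ) : Fin N) = 0 := by norm_num
          rw [this, sub_zero]
          simpa using ht
        · simpa using htc
      | succ k ih =>
        intro j t ht htc
        obtain ⟨ih1, ih2⟩ := ih j t ht htc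
        rw [hTj (j - (k : Fin N))] at ih1
        rcases ih1 with h1 | h1
        · omega
        · rw [mem_shiftSet] at h1
          have hidx : (j - (k : Fin N)) - 1 = j - ((k+1 : ℕ) : Fin N) := by
            push_cast
            ring
          rw [hidx] at h1
          constructor
          · have : t - ((k+1:ℕ):ℤ) = t - k - 1 := by push_cast; ring
            rw [this]
            exact h1
          · push_cast
            omega
    have hlow : ∀ (j : Fin N) (t : ℤ), t ∈ T j → c ≤ t := by
      intro j t ht
      by_contra hcon
      push_neg at hcon
      have hbt : b ≤ t := hb j t ht
      set k : ℕ := (t - b + 1).toNat with hk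
      have hk1 : (k : ℤ) = t - b + 1 := by
        rw [hk]
        omega
      obtain ⟨hd1, _⟩ := hdown k j t ht hcon
      have := hb _ _ hd1
      omega
    -- T j = {n | 0 ≤ n}
    have hTeq : ∀ j : Fin N, T j = {n : ℤ | c ≤ n} := by
      intro j
      ext t
      simp only [Set.mem_setOf_eq]
      constructor
      · exact hlow j t
      · intro htc
        have : t = c + ((t - c).toNat : ℤ) := by omega
        rw [this]
        exact hup _ j
    have hc0 : c = 0 := by
      have hvcz := (hT.1 0).1
      rcases lt_trichotomy c 0 with hlt | heq | hgt
      · have he : {n : ℤ | 0 ≤ n} \ T 0 = ∅ := by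
          rw [hTeq 0]
          ext t
          simp only [Set.mem_diff, Set.mem_setOf_eq, Set.mem_empty_iff_false, iff_false]
          intro hcon
          omega
        have hne' : (T 0 \ {n : ℤ | 0 ≤ n}).Nonempty := by
          refine ⟨c, ?_, ?_⟩
          · rw [hTeq 0]; simp
          · simp only [Set.mem_setOf_eq]; omega
        have h1 := hvcz.2.2
        rw [he] at h1
        simp only [Set.ncard_empty] at h1
        have h2 := (Set.ncard_pos hvcz.1).mpr hne'
        omega
      · exact heq
      · have he : T 0 \ {n : ℤ | 0 ≤ n} = ∅ := by
          rw [hTeq 0]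
          ext t
          simp only [Set.mem_diff, Set.mem_setOf_eq, Set.mem_empty_iff_false, iff_false]
          intro hcon
          omega
        have hne' : ({n : ℤ | 0 ≤ n} \ T 0).Nonempty := by
          refine ⟨0, ?_, ?_⟩
          · simp
          · rw [hTeq 0]; simp only [Set.mem_setOf_eq]; omega
        have h1 := hvcz.2.2
        rw [he] at h1
        simp only [Set.ncard_empty] at h1
        have h2 := (Set.ncard_pos hvcz.2.1).mpr hne'
        omega
    apply hnt
    funext j
    rw [hTeq j, hc0]

lemma mkdv_reach (N : ℕ) [NeZero N] (hN : 1 < N) :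
    ∀ (n : ℕ) (T : Fin N → Set ℤ), IsMKdVTuple N T →
      (∑ j, vczWeight (T j)).toNat ≤ n →
      ∃ (m : ℕ) (C : ℕ → Fin N → Set ℤ),
        C 0 = T ∧ C m = (fun _ => {n : ℤ | 0 ≤ n}) ∧
        (∀ l ≤ m, IsMKdVTuple N (C l)) ∧
        ∀ l < m, ∃ i : Fin N,
          (∀ j : Fin N, j ≠ i → C (l + 1) j = C l j) ∧
          C (l + 1) i ≠ C l i ∧
          vczWeight (C (l + 1) i) < vczWeight (C l i) := by
  classical
  intro n
  induction n with
  | zero =>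
    intro T hT hle
    by_cases htr : T = fun _ => {n : ℤ | 0 ≤ n}
    · refine ⟨0, fun _ => T, rfl, htr, ?_, ?_⟩
      · intro l _; exact hT
      · intro l hl; omega
    · exfalso
      obtain ⟨i, S', hT', hne, hw⟩ := mkdv_step N hN T hT htr
      have h1 : ∑ j, vczWeight (Function.update T i S' j)
          = vczWeight S' + ∑ j ∈ Finset.univ \ {i}, vczWeight (T j) := by
        rw [Finset.sum_eq_add_sum_sdiff_singleton_of_mem (Finset.mem_univ i)
          (fun j => vczWeight (Function.update T i S' j))]
        rw [Function.update_self]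
        congr 1
        apply Finset.sum_congr rfl
        intro j hj
        rw [Finset.mem_sdiff, Finset.mem_singleton] at hj
        rw [Function.update_of_ne hj.2]
      have h2 : ∑ j, vczWeight (T j)
          = vczWeight (T i) + ∑ j ∈ Finset.univ \ {i}, vczWeight (T j) :=
        Finset.sum_eq_add_sum_sdiff_singleton_of_mem (Finset.mem_univ i) _
      have h3 : 0 ≤ ∑ j, vczWeight (Function.update T i S' j) :=
        Finset.sum_nonneg (fun j _ => vczWeight_nonneg ((hT'.1 j).1))
      omega
  | succ n ih =>
    intro T hT hle
    by_cases htr : T = fun _ => {n : ℤ | 0 ≤ n}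
    · refine ⟨0, fun _ => T, rfl, htr, ?_, ?_⟩
      · intro l _; exact hT
      · intro l hl; omega
    · obtain ⟨i, S', hT', hne, hw⟩ := mkdv_step N hN T hT htr
      set T' := Function.update T i S' with hT'def
      have h1 : ∑ j, vczWeight (T' j)
          = vczWeight S' + ∑ j ∈ Finset.univ \ {i}, vczWeight (T j) := by
        rw [Finset.sum_eq_add_sum_sdiff_singleton_of_mem (Finset.mem_univ i)
          (fun j => vczWeight (T' j))]
        rw [hT'def, Function.update_self]
        congr 1
        apply Finset.sum_congr rfl
        intro j hj
        rw [Finset.mem_sdiff, Finset.mem_singleton] at hj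
        rw [Function.update_of_ne hj.2]
      have h2 : ∑ j, vczWeight (T j)
          = vczWeight (T i) + ∑ j ∈ Finset.univ \ {i}, vczWeight (T j) :=
        Finset.sum_eq_add_sum_sdiff_singleton_of_mem (Finset.mem_univ i) _
      have h3 : 0 ≤ ∑ j, vczWeight (T' j) :=
        Finset.sum_nonneg (fun j _ => vczWeight_nonneg ((hT'.1 j).1))
      have hle' : (∑ j, vczWeight (T' j)).toNat ≤ n := by omega
      obtain ⟨m, C, hC0, hCm, hall, hstep⟩ := ih T' hT' hle'
      refine ⟨m + 1, fun l => if l = 0 then T else C (l - 1), by simp, ?_, ?_, ?_⟩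
      · show (if m + 1 = 0 then T else C (m + 1 - 1)) = fun _ => {n : ℤ | 0 ≤ n}
        rw [if_neg (by omega : ¬ (m + 1 = 0))]
        simpa using hCm
      · intro l hl
        by_cases hl0 : l = 0
        · subst hl0
          show IsMKdVTuple N (if (0:ℕ) = 0 then T else C (0 - 1))
          rw [if_pos rfl]
          exact hT
        · show IsMKdVTuple N (if l = 0 then T else C (l - 1))
          rw [if_neg hl0]
          exact hall (l - 1) (by omega)
      · intro l hl
        by_cases hl0 : l = 0
        · subst hl0
          refine ⟨i, ?_, ?_, ?_⟩
          · intro j hj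
            show (if (0 + 1 : ℕ) = 0 then T else C (0 + 1 - 1)) j
              = (if (0 : ℕ) = 0 then T else C (0 - 1)) j
            rw [if_neg (by omega : ¬ (0 + 1 = 0)), if_pos rfl]
            show C 0 j = T j
            rw [hC0, hT'def, Function.update_of_ne hj]
          · show (if (0 + 1 : ℕ) = 0 then T else C (0 + 1 - 1)) i
              ≠ (if (0 : ℕ) = 0 then T else C (0 - 1)) i
            rw [if_neg (by omega : ¬ (0 + 1 = 0)), if_pos rfl]
            show C 0 i ≠ T i
            rw [hC0, hT'def, Function.update_self]
            exact hne
          · show vczWeight ((if (0 + 1 : ℕ) = 0 then T else C (0 + 1 - 1)) i)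
              < vczWeight ((if (0 : ℕ) = 0 then T else C (0 - 1)) i)
            rw [if_neg (by omega : ¬ (0 + 1 = 0)), if_pos rfl]
            show vczWeight (C 0 i) < vczWeight (T i)
            rw [hC0, hT'def, Function.update_self]
            exact hw
        · obtain ⟨k, rfl⟩ : ∃ k, l = k + 1 := ⟨l - 1, by omega⟩
          obtain ⟨i', ha, hb, hc⟩ := hstep k (by omega)
          have e1 : ¬ (k + 1 + 1 = 0) := by omega
          have e2 : ¬ (k + 1 = 0) := by omega
          refine ⟨i', ?_, ?_, ?_⟩
          · intro j hj
            show (if (k + 1 + 1 : ℕ) = 0 then T else C (k + 1 + 1 - 1)) j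
              = (if (k + 1 : ℕ) = 0 then T else C (k + 1 - 1)) j
            rw [if_neg e1, if_neg e2]
            show C (k + 1) j = C k j
            exact ha j hj
          · show (if (k + 1 + 1 : ℕ) = 0 then T else C (k + 1 + 1 - 1)) i'
              ≠ (if (k + 1 : ℕ) = 0 then T else C (k + 1 - 1)) i'
            rw [if_neg e1, if_neg e2]
            show C (k + 1) i' ≠ C k i'
            exact hb
          · show vczWeight ((if (k + 1 + 1 : ℕ) = 0 then T else C (k + 1 + 1 - 1)) i')
              < vczWeight ((if (k + 1 : ℕ) = 0 then T else C (k + 1 - 1)) i')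
            rw [if_neg e1, if_neg e2]
            show vczWeight (C (k + 1) i') < vczWeight (C k i')
            exact hc

/-- Fix `N > 1`.  Every mKdV tuple of subsets can be transformed to
the tuple `(ℤ≥0,…,ℤ≥0)` by a finite sequence of degree-decreasing mutations: there are
`m ≥ 0` and mKdV tuples `𝐒⁰ = (S₁,…,S_N), 𝐒¹, …, 𝐒^m = (ℤ≥0,…,ℤ≥0)` such that for each
`l < m`, the tuple `𝐒^{l+1}` differs from `𝐒^l` in exactly one position `i`, and the
weight of the partition associated to the new `i`-th entry is strictly smaller than the
weight of the partition associated to the old `i`-th entry. -/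
theorem mkdv_degree_decreasing_mutations (N : ℕ) [NeZero N] (hN : 1 < N)
    (T : Fin N → Set ℤ) (hT : IsMKdVTuple N T) :
    ∃ (m : ℕ) (C : ℕ → Fin N → Set ℤ),
      C 0 = T ∧ C m = (fun _ => {n : ℤ | 0 ≤ n}) ∧
      (∀ l ≤ m, IsMKdVTuple N (C l)) ∧
      ∀ l < m, ∃ i : Fin N,
        (∀ j : Fin N, j ≠ i → C (l + 1) j = C l j) ∧
        C (l + 1) i ≠ C l i ∧
        vczWeight (C (l + 1) i) < vczWeight (C l i) :=
  mkdv_reach N hN (∑ j, vczWeight (T j)).toNat T hT (le_refl _)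
end
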